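/- Let f : [0,1] → [0,1] be a piecewise continuous interval map with no connections and no periodic points. Then for every x ∈ [0,1] and every integer r ≥ 1, there exists an open subinterval J of [0,1] containing x (relatively open in [0,1]) such that for every y ∈ J, none of f(y), f²(y), …, f^r(y) lies in J. -/

import Mathlib

open Set Filter MeasureTheory Topology
open scoped ENNReal

/-- Data witnessing that `f` is a piecewise continuous interval map on `[0,1]`:
a partition `0 = pt 0 < pt 1 < ⋯ < pt (d+1) = 1` such that `f` is continuous on each
open subinterval and has one-sided limits `wR i` (right limit at the left endpoint)
and `wL i` (left limit at the right endpoint) on each subinterval. -/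
structure PiecewiseContData (f : ℝ → ℝ) where
  d : ℕ
  pt : Fin (d + 2) → ℝ
  mono : StrictMono pt
  first : pt 0 = 0
  last : pt (Fin.last (d + 1)) = 1
  cont : ∀ i : Fin (d + 1), ContinuousOn f (Ioo (pt i.castSucc) (pt i.succ))
  wR : Fin (d + 1) → ℝ
  wL : Fin (d + 1) → ℝ
  wR_lim : ∀ i : Fin (d + 1),
    Tendsto f (𝓝[Ioo (pt i.castSucc) (pt i.succ)] (pt i.castSucc)) (𝓝 (wR i))
  wL_lim : ∀ i : Fin (d + 1),
    Tendsto f (𝓝[Ioo (pt i.castSucc) (pt i.succ)] (pt i.succ)) (𝓝 (wL i))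

/-- The set `D` of partition points. -/
def PiecewiseContData.D {f : ℝ → ℝ} (P : PiecewiseContData f) : Set ℝ :=
  Set.range P.pt

/-- The set `W` of one-sided limit values of `f` at the partition points. -/
def PiecewiseContData.W {f : ℝ → ℝ} (P : PiecewiseContData f) : Set ℝ :=
  Set.range P.wR ∪ Set.range P.wL

/-- The no-connections condition: no forward iterate (`k ≥ 1`) of a partition point lies
in `D`, and no forward iterate (`k ≥ 0`) of a one-sided limit value lies in `D`. -/
def PiecewiseContData.NoConnections {f : ℝ → ℝ} (P : PiecewiseContData f) : Prop :=
  (∀ i : Fin (P.d + 2), ∀ k : ℕ, 1 ≤ k → f^[k] (P.pt i) ∉ P.D) ∧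
  (∀ w ∈ P.W, ∀ k : ℕ, f^[k] w ∉ P.D)

/-- `f` has no periodic points in `[0,1]`. -/
def NoPeriodicPts (f : ℝ → ℝ) : Prop :=
  ∀ x ∈ Icc (0:ℝ) 1, ∀ k : ℕ, 1 ≤ k → f^[k] x ≠ x

/-- The Birkhoff average `μ_n = (1/n) ∑_{k<n} δ_{f^k(p)}` of Dirac measures along the
orbit of `p`. -/
noncomputable def birkhoffMeasure (f : ℝ → ℝ) (p : ℝ) (n : ℕ) : Measure ℝ :=
  (n : ℝ≥0∞)⁻¹ • ∑ k ∈ Finset.range n, Measure.dirac (f^[k] p)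

lemma pcd_pt_mem {f : ℝ → ℝ} (P : PiecewiseContData f) (i : Fin (P.d + 2)) :
    P.pt i ∈ Icc (0:ℝ) 1 :=
  ⟨P.first ▸ P.mono.monotone (Fin.zero_le _), P.last ▸ P.mono.monotone (Fin.le_last _)⟩

lemma pcd_mem_Ioo {f : ℝ → ℝ} (P : PiecewiseContData f) {c : ℝ} (hc : c ∈ Icc (0:ℝ) 1)
    (hcD : c ∉ P.D) :
    ∃ i : Fin (P.d + 1), c ∈ Ioo (P.pt i.castSucc) (P.pt i.succ) := by
  classical
  have hc0 : 0 < c := by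
    rcases hc.1.lt_or_eq with h | h
    · exact h
    · exact absurd ⟨0, by rw [P.first, h]⟩ hcD
  have hc1 : c < 1 := by
    rcases hc.2.lt_or_eq with h | h
    · exact h
    · exact absurd ⟨Fin.last _, by rw [P.last, h]⟩ hcD
  set s : Finset (Fin (P.d + 2)) := Finset.univ.filter (fun j => P.pt j < c) with hs
  have h0s : (0 : Fin (P.d + 2)) ∈ s := by simp [hs, P.first, hc0]
  have hsne : s.Nonempty := ⟨0, h0s⟩
  have hjlt : P.pt (s.max' hsne) < c := by
    have := s.max'_mem hsne; simpa [hs] using this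
  have hjne : s.max' hsne ≠ Fin.last _ := by
    intro h; rw [h, P.last] at hjlt; linarith
  obtain ⟨i, hi⟩ := Fin.exists_castSucc_eq.mpr hjne
  refine ⟨i, ⟨by rw [hi]; exact hjlt, ?_⟩⟩
  by_contra h
  push_neg at h
  have hne : P.pt i.succ ≠ c := fun he => hcD ⟨i.succ, he⟩
  have hmem : i.succ ∈ s := by simp [hs, lt_of_le_of_ne h hne]
  have hle := s.le_max' _ hmem
  rw [← hi] at hle
  exact absurd hle (not_le.mpr (Fin.castSucc_lt_succ (i := i)))

lemma pcd_continuousAt {f : ℝ → ℝ} (P : PiecewiseContData f) {c : ℝ}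
    (hc : c ∈ Icc (0:ℝ) 1) (hcD : c ∉ P.D) : ContinuousAt f c := by
  obtain ⟨i, hi⟩ := pcd_mem_Ioo P hc hcD
  exact (P.cont i).continuousAt (isOpen_Ioo.mem_nhds hi)

lemma pcd_wL_mem {f : ℝ → ℝ} (hf : MapsTo f (Icc (0:ℝ) 1) (Icc (0:ℝ) 1))
    (P : PiecewiseContData f) (i : Fin (P.d + 1)) : P.wL i ∈ Icc (0:ℝ) 1 := by
  have hlt : P.pt i.castSucc < P.pt i.succ := P.mono (Fin.castSucc_lt_succ (i := i))
  have : (𝓝[Ioo (P.pt i.castSucc) (P.pt i.succ)] (P.pt i.succ)).NeBot :=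
    right_nhdsWithin_Ioo_neBot hlt
  refine isClosed_Icc.mem_of_tendsto (P.wL_lim i) ?_
  filter_upwards [self_mem_nhdsWithin] with t ht
  have h0 := (pcd_pt_mem P i.castSucc).1
  have h1 := (pcd_pt_mem P i.succ).2
  exact hf ⟨(lt_of_le_of_lt h0 ht.1).le, (lt_of_lt_of_le ht.2 h1).le⟩

lemma pcd_wR_mem {f : ℝ → ℝ} (hf : MapsTo f (Icc (0:ℝ) 1) (Icc (0:ℝ) 1))
    (P : PiecewiseContData f) (i : Fin (P.d + 1)) : P.wR i ∈ Icc (0:ℝ) 1 := by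
  have hlt : P.pt i.castSucc < P.pt i.succ := P.mono (Fin.castSucc_lt_succ (i := i))
  have : (𝓝[Ioo (P.pt i.castSucc) (P.pt i.succ)] (P.pt i.castSucc)).NeBot :=
    left_nhdsWithin_Ioo_neBot hlt
  refine isClosed_Icc.mem_of_tendsto (P.wR_lim i) ?_
  filter_upwards [self_mem_nhdsWithin] with t ht
  have h0 := (pcd_pt_mem P i.castSucc).1
  have h1 := (pcd_pt_mem P i.succ).2
  exact hf ⟨(lt_of_le_of_lt h0 ht.1).le, (lt_of_lt_of_le ht.2 h1).le⟩

lemma tendsto_iter_prefix {f : ℝ → ℝ} (P : PiecewiseContData f)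
    (hf : MapsTo f (Icc (0:ℝ) 1) (Icc (0:ℝ) 1)) {g : ℝ → ℝ} {F : Filter ℝ} {c : ℝ}
    (hc : c ∈ Icc (0:ℝ) 1) (hT : Tendsto g F (𝓝 c)) (j : ℕ)
    (hpre : ∀ i < j, f^[i] c ∉ P.D) :
    Tendsto (fun y => f^[j] (g y)) F (𝓝 (f^[j] c)) := by
  induction j with
  | zero => simpa using hT
  | succ n ih =>
    have h1 : f^[n] c ∈ Icc (0:ℝ) 1 := hf.iterate n hc
    have h2 : ContinuousAt f (f^[n] c) := pcd_continuousAt P h1 (hpre n n.lt_succ_self)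
    have h3 := ih (fun i hi => hpre i (hi.trans n.lt_succ_self))
    have h4 := h2.tendsto.comp h3
    simpa [Function.comp_def, Function.iterate_succ_apply'] using h4

lemma keybound {g : ℝ → ℝ} {G : Filter ℝ} {c x : ℝ} (hT : Tendsto g G (𝓝 c))
    (hcx : c ≠ x) : ∃ ε > 0, ∀ᶠ y in G, ε ≤ |g y - x| := by
  have hpos : 0 < |c - x| := abs_pos.mpr (sub_ne_zero.mpr hcx)
  refine ⟨|c - x| / 2, by linarith, ?_⟩
  have hca : ContinuousAt (fun t => |t - x|) c := by fun_prop
  have h1 : ∀ᶠ t in 𝓝 c, |c - x| / 2 < |t - x| :=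
    hca.eventually_const_lt (by linarith)
  exact (hT.eventually h1).mono fun y hy => hy.le

lemma key {f : ℝ → ℝ} (hf : MapsTo f (Icc (0:ℝ) 1) (Icc (0:ℝ) 1))
    (P : PiecewiseContData f) (hnc : P.NoConnections) (hnp : NoPeriodicPts f)
    {x : ℝ} (hx : x ∈ Icc (0:ℝ) 1) (F : Filter ℝ)
    (hF : ∀ᶠ y in F, y ∈ Icc (0:ℝ) 1) {L : ℝ} (hLmem : L ∈ Icc (0:ℝ) 1)
    (hTL : Tendsto f F (𝓝 L))
    (hcase : (x ∈ P.D ∧ ∀ j : ℕ, f^[j] L ∉ P.D) ∨ (x ∉ P.D ∧ L = f x))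
    (k : ℕ) (hk : 1 ≤ k) :
    ∃ ε > 0, ∀ᶠ y in F, ε ≤ |f^[k] y - x| := by
  classical
  by_cases hall : ∀ i, i + 1 < k → f^[i] L ∉ P.D
  · have hpre : ∀ i < k - 1, f^[i] L ∉ P.D := fun i hi => hall i (by omega)
    have hT0 := tendsto_iter_prefix P hf hLmem hTL (k - 1) hpre
    have hkk : k - 1 + 1 = k := by omega
    simp only [← Function.iterate_succ_apply, Nat.succ_eq_add_one, hkk] at hT0
    have hcx : f^[k - 1] L ≠ x := by
      rcases hcase with ⟨hxD, hsafe⟩ | ⟨hxD, hL⟩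
      · intro h; exact hsafe (k - 1) (h ▸ hxD)
      · have hceq : f^[k - 1] L = f^[k] x := by
          rw [hL, ← Function.iterate_succ_apply]; simp only [Nat.succ_eq_add_one, hkk]
        rw [hceq]; exact hnp x hx k hk
    exact keybound hT0 hcx
  · push_neg at hall
    have hex : ∃ m, m + 1 < k ∧ f^[m] L ∈ P.D := hall
    set m := Nat.find hex with hm
    obtain ⟨hmk, hmD⟩ := Nat.find_spec hex
    have hpre : ∀ i < m, f^[i] L ∉ P.D := by
      intro i hi hD
      exact Nat.find_min hex hi ⟨by omega, hD⟩
    rcases hcase with ⟨hxD, hsafe⟩ | ⟨hxD, hL⟩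
    · exact absurd hmD (hsafe m)
    obtain ⟨i₀, hi₀⟩ : ∃ i₀, P.pt i₀ = f^[m] L := hmD
    set s := k - (m + 2) with hsdef
    have hks : k = s + 1 + (m + 1) := by omega
    have hzx : f^[m + 1] x = f^[m] L := by rw [Function.iterate_succ_apply, ← hL]
    have hsplit : ∀ y, f^[k] y = f^[s] (f (f^[m + 1] y)) := by
      intro y
      rw [hks, Function.iterate_add_apply, Function.iterate_succ_apply]
    have hTz : Tendsto (fun y => f^[m + 1] y) F (𝓝 (f^[m] L)) := by
      have h := tendsto_iter_prefix P hf hLmem hTL m hpre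
      simpa [Function.iterate_succ_apply] using h
    have hIccIter : ∀ᶠ y in F, f^[m + 1] y ∈ Icc (0:ℝ) 1 :=
      hF.mono fun y hy => hf.iterate (m + 1) hy
    have hkx : f^[k] x ≠ x := hnp x hx k hk
    have hBval : ∀ y, f^[m + 1] y = f^[m] L → f^[k] y = f^[k] x := by
      intro y hy
      rw [hsplit y, hy, ← hzx, ← hsplit x]
    have hA : ∃ ε > 0, ∀ᶠ y in F, f^[m + 1] y < f^[m] L → ε ≤ |f^[k] y - x| := by
      by_cases hi0 : i₀ = 0
      · refine ⟨1, one_pos, hIccIter.mono ?_⟩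
        intro y hy hlt
        have hz0 : f^[m] L = 0 := by rw [← hi₀, hi0, P.first]
        exact absurd (hz0 ▸ hlt) (not_lt.mpr hy.1)
      · obtain ⟨i', hi'⟩ := Fin.exists_succ_eq_of_ne_zero hi0
        have hzsucc : P.pt i'.succ = f^[m] L := by rw [hi', hi₀]
        have hlt' : P.pt i'.castSucc < f^[m] L :=
          hzsucc ▸ P.mono (Fin.castSucc_lt_succ (i := i'))
        have hwSafe : ∀ j, f^[j] (P.wL i') ∉ P.D := fun j => hnc.2 _ (Or.inr ⟨i', rfl⟩) j
        have hwmem : P.wL i' ∈ Icc (0:ℝ) 1 := pcd_wL_mem hf P i'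
        have hT1 : Tendsto (fun y => f^[m + 1] y)
            (F ⊓ 𝓟 {y | f^[m + 1] y < f^[m] L})
            (𝓝[Ioo (P.pt i'.castSucc) (P.pt i'.succ)] (P.pt i'.succ)) := by
          rw [tendsto_nhdsWithin_iff]
          constructor
          · rw [hzsucc]; exact hTz.mono_left inf_le_left
          · have h1 : ∀ᶠ y in F ⊓ 𝓟 {y | f^[m + 1] y < f^[m] L},
                f^[m + 1] y < f^[m] L :=
              eventually_inf_principal.mpr (Eventually.of_forall fun y hy => hy)
            have h2 : ∀ᶠ y in F ⊓ 𝓟 {y | f^[m + 1] y < f^[m] L},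
                P.pt i'.castSucc < f^[m + 1] y :=
              (hTz.mono_left inf_le_left).eventually (eventually_gt_nhds hlt')
            filter_upwards [h1, h2] with y hy1 hy2
            exact ⟨hy2, by rw [hzsucc]; exact hy1⟩
        have hT2 : Tendsto (fun y => f (f^[m + 1] y))
            (F ⊓ 𝓟 {y | f^[m + 1] y < f^[m] L}) (𝓝 (P.wL i')) :=
          (P.wL_lim i').comp hT1
        have hT3 := tendsto_iter_prefix P hf hwmem hT2 s (fun i _ => hwSafe i)
        have hcx : f^[s] (P.wL i') ≠ x := by
          intro h
          have hD : f^[m + 1 + s] (P.wL i') ∈ P.D := by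
            rw [Function.iterate_add_apply, h, hzx]
            exact ⟨i₀, hi₀⟩
          exact hwSafe (m + 1 + s) hD
        obtain ⟨ε, hε, hev⟩ := keybound hT3 hcx
        refine ⟨ε, hε, ?_⟩
        have hev' := eventually_inf_principal.mp hev
        exact hev'.mono fun y hy hlt => by rw [hsplit y]; exact hy hlt
    have hC : ∃ ε > 0, ∀ᶠ y in F, f^[m] L < f^[m + 1] y → ε ≤ |f^[k] y - x| := by
      by_cases hilast : i₀ = Fin.last _
      · refine ⟨1, one_pos, hIccIter.mono ?_⟩
        intro y hy hlt
        have hz1 : f^[m] L = 1 := by rw [← hi₀, hilast, P.last]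
        exact absurd (hz1 ▸ hlt) (not_lt.mpr hy.2)
      · obtain ⟨i', hi'⟩ := Fin.exists_castSucc_eq.mpr hilast
        have hzcast : P.pt i'.castSucc = f^[m] L := by rw [hi', hi₀]
        have hlt' : f^[m] L < P.pt i'.succ :=
          hzcast ▸ P.mono (Fin.castSucc_lt_succ (i := i'))
        have hwSafe : ∀ j, f^[j] (P.wR i') ∉ P.D := fun j => hnc.2 _ (Or.inl ⟨i', rfl⟩) j
        have hwmem : P.wR i' ∈ Icc (0:ℝ) 1 := pcd_wR_mem hf P i'
        have hT1 : Tendsto (fun y => f^[m + 1] y)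
            (F ⊓ 𝓟 {y | f^[m] L < f^[m + 1] y})
            (𝓝[Ioo (P.pt i'.castSucc) (P.pt i'.succ)] (P.pt i'.castSucc)) := by
          rw [tendsto_nhdsWithin_iff]
          constructor
          · rw [hzcast]; exact hTz.mono_left inf_le_left
          · have h1 : ∀ᶠ y in F ⊓ 𝓟 {y | f^[m] L < f^[m + 1] y},
                f^[m] L < f^[m + 1] y :=
              eventually_inf_principal.mpr (Eventually.of_forall fun y hy => hy)
            have h2 : ∀ᶠ y in F ⊓ 𝓟 {y | f^[m] L < f^[m + 1] y},
                f^[m + 1] y < P.pt i'.succ :=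
              (hTz.mono_left inf_le_left).eventually (eventually_lt_nhds hlt')
            filter_upwards [h1, h2] with y hy1 hy2
            exact ⟨by rw [hzcast]; exact hy1, hy2⟩
        have hT2 : Tendsto (fun y => f (f^[m + 1] y))
            (F ⊓ 𝓟 {y | f^[m] L < f^[m + 1] y}) (𝓝 (P.wR i')) :=
          (P.wR_lim i').comp hT1
        have hT3 := tendsto_iter_prefix P hf hwmem hT2 s (fun i _ => hwSafe i)
        have hcx : f^[s] (P.wR i') ≠ x := by
          intro h
          have hD : f^[m + 1 + s] (P.wR i') ∈ P.D := by
            rw [Function.iterate_add_apply, h, hzx]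
            exact ⟨i₀, hi₀⟩
          exact hwSafe (m + 1 + s) hD
        obtain ⟨ε, hε, hev⟩ := keybound hT3 hcx
        refine ⟨ε, hε, ?_⟩
        have hev' := eventually_inf_principal.mp hev
        exact hev'.mono fun y hy hlt => by rw [hsplit y]; exact hy hlt
    obtain ⟨εA, hεA, hevA⟩ := hA
    obtain ⟨εC, hεC, hevC⟩ := hC
    have hεB : 0 < |f^[k] x - x| := abs_pos.mpr (sub_ne_zero.mpr hkx)
    refine ⟨min (min εA εC) |f^[k] x - x|, by positivity, ?_⟩
    filter_upwards [hevA, hevC] with y hyA hyC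
    rcases lt_trichotomy (f^[m + 1] y) (f^[m] L) with h | h | h
    · exact le_trans (le_trans (min_le_left _ _) (min_le_left _ _)) (hyA h)
    · rw [hBval y h]; exact min_le_right _ _
    · exact le_trans (le_trans (min_le_left _ _) (min_le_right _ _)) (hyC h)

/-- for a piecewise continuous interval map with no connections and no
periodic points, every `x ∈ [0,1]` has a relatively open subinterval neighborhood
`J = (a,b) ∩ [0,1]` such that no orbit point `f(y), …, f^r(y)` of a point `y ∈ J`
returns to `J`. -/
theorem stmt0 (f : ℝ → ℝ) (hf : MapsTo f (Icc (0:ℝ) 1) (Icc (0:ℝ) 1))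
    (P : PiecewiseContData f) (hnc : P.NoConnections) (hnp : NoPeriodicPts f)
    (x : ℝ) (hx : x ∈ Icc (0:ℝ) 1) (r : ℕ) (hr : 1 ≤ r) :
    ∃ a b : ℝ, a < x ∧ x < b ∧
      ∀ y ∈ Ioo a b ∩ Icc (0:ℝ) 1, ∀ k : ℕ, 1 ≤ k → k ≤ r →
        f^[k] y ∉ Ioo a b ∩ Icc (0:ℝ) 1 := by
  classical
  have hperk : ∀ k : ℕ, 1 ≤ k → ∃ ε > 0, ∀ᶠ y in 𝓝[Icc (0:ℝ) 1] x, ε ≤ |f^[k] y - x| := by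
    intro k hk
    by_cases hxD : x ∈ P.D
    · obtain ⟨i₀, hi₀⟩ : ∃ i₀, P.pt i₀ = x := id hxD
      have hεB : 0 < |f^[k] x - x| := abs_pos.mpr (sub_ne_zero.mpr (hnp x hx k hk))
      have hL : ∃ ε > 0, ∀ᶠ y in 𝓝[Icc (0:ℝ) 1 ∩ Iio x] x, ε ≤ |f^[k] y - x| := by
        by_cases hi0 : i₀ = 0
        · refine ⟨1, one_pos, ?_⟩
          have hx0 : x = 0 := by rw [← hi₀, hi0, P.first]
          have hempty : Icc (0:ℝ) 1 ∩ Iio x = ∅ := by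
            rw [eq_empty_iff_forall_notMem]
            rintro t ⟨⟨ht0, _⟩, htx⟩
            rw [hx0] at htx; exact absurd ht0 (not_le.mpr htx)
          rw [hempty, nhdsWithin_empty]
          simp
        · obtain ⟨i', hi'⟩ := Fin.exists_succ_eq_of_ne_zero hi0
          have hzsucc : P.pt i'.succ = x := by rw [hi', hi₀]
          have haL : P.pt i'.castSucc < x :=
            hzsucc ▸ P.mono (Fin.castSucc_lt_succ (i := i'))
          have hsub : Ioo (P.pt i'.castSucc) x ⊆ Icc (0:ℝ) 1 := fun t ht =>
            ⟨(pcd_pt_mem P i'.castSucc).1.trans ht.1.le, ht.2.le.trans hx.2⟩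
          have hTL : Tendsto f (𝓝[Ioo (P.pt i'.castSucc) x] x) (𝓝 (P.wL i')) := by
            have h := P.wL_lim i'
            rwa [hzsucc] at h
          obtain ⟨ε, hε, hev⟩ := key hf P hnc hnp hx (𝓝[Ioo (P.pt i'.castSucc) x] x)
            (eventually_mem_nhdsWithin.mono fun y hy => hsub hy) (pcd_wL_mem hf P i')
            hTL (Or.inl ⟨hxD, fun j => hnc.2 _ (Or.inr ⟨i', rfl⟩) j⟩) k hk
          refine ⟨ε, hε, hev.filter_mono ?_⟩
          have hmem : Ioi (P.pt i'.castSucc) ∈ 𝓝[Icc (0:ℝ) 1 ∩ Iio x] x :=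
            mem_nhdsWithin_of_mem_nhds (Ioi_mem_nhds haL)
          calc 𝓝[Icc (0:ℝ) 1 ∩ Iio x] x
              = 𝓝[(Icc (0:ℝ) 1 ∩ Iio x) ∩ Ioi (P.pt i'.castSucc)] x :=
                (nhdsWithin_inter_of_mem' hmem).symm
            _ ≤ 𝓝[Ioo (P.pt i'.castSucc) x] x := nhdsWithin_mono _ (by
                rintro t ⟨⟨_, ht2⟩, ht3⟩; exact ⟨ht3, ht2⟩)
      have hR : ∃ ε > 0, ∀ᶠ y in 𝓝[Icc (0:ℝ) 1 ∩ Ioi x] x, ε ≤ |f^[k] y - x| := by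
        by_cases hilast : i₀ = Fin.last _
        · refine ⟨1, one_pos, ?_⟩
          have hx1 : x = 1 := by rw [← hi₀, hilast, P.last]
          have hempty : Icc (0:ℝ) 1 ∩ Ioi x = ∅ := by
            rw [eq_empty_iff_forall_notMem]
            rintro t ⟨⟨_, ht1⟩, htx⟩
            rw [hx1] at htx; exact absurd ht1 (not_le.mpr htx)
          rw [hempty, nhdsWithin_empty]
          simp
        · obtain ⟨i', hi'⟩ := Fin.exists_castSucc_eq.mpr hilast
          have hzcast : P.pt i'.castSucc = x := by rw [hi', hi₀]
          have haR : x < P.pt i'.succ :=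
            hzcast ▸ P.mono (Fin.castSucc_lt_succ (i := i'))
          have hsub : Ioo x (P.pt i'.succ) ⊆ Icc (0:ℝ) 1 := fun t ht =>
            ⟨hx.1.trans ht.1.le, ht.2.le.trans (pcd_pt_mem P i'.succ).2⟩
          have hTL : Tendsto f (𝓝[Ioo x (P.pt i'.succ)] x) (𝓝 (P.wR i')) := by
            have h := P.wR_lim i'
            rwa [hzcast] at h
          obtain ⟨ε, hε, hev⟩ := key hf P hnc hnp hx (𝓝[Ioo x (P.pt i'.succ)] x)
            (eventually_mem_nhdsWithin.mono fun y hy => hsub hy) (pcd_wR_mem hf P i')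
            hTL (Or.inl ⟨hxD, fun j => hnc.2 _ (Or.inl ⟨i', rfl⟩) j⟩) k hk
          refine ⟨ε, hε, hev.filter_mono ?_⟩
          have hmem : Iio (P.pt i'.succ) ∈ 𝓝[Icc (0:ℝ) 1 ∩ Ioi x] x :=
            mem_nhdsWithin_of_mem_nhds (Iio_mem_nhds haR)
          calc 𝓝[Icc (0:ℝ) 1 ∩ Ioi x] x
              = 𝓝[(Icc (0:ℝ) 1 ∩ Ioi x) ∩ Iio (P.pt i'.succ)] x :=
                (nhdsWithin_inter_of_mem' hmem).symm
            _ ≤ 𝓝[Ioo x (P.pt i'.succ)] x := nhdsWithin_mono _ (by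
                rintro t ⟨⟨_, ht2⟩, ht3⟩; exact ⟨ht2, ht3⟩)
      obtain ⟨εL, hεL, hevL⟩ := hL
      obtain ⟨εR, hεR, hevR⟩ := hR
      refine ⟨min (min εL εR) |f^[k] x - x|, lt_min (lt_min hεL hεR) hεB, ?_⟩
      have hcover : 𝓝[Icc (0:ℝ) 1] x ≤
          (𝓝[Icc (0:ℝ) 1 ∩ Iio x] x ⊔ pure x) ⊔ 𝓝[Icc (0:ℝ) 1 ∩ Ioi x] x := by
        have hsub : Icc (0:ℝ) 1 ⊆
            ((Icc (0:ℝ) 1 ∩ Iio x) ∪ {x}) ∪ (Icc (0:ℝ) 1 ∩ Ioi x) := by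
          intro t ht
          rcases lt_trichotomy t x with h | h | h
          · exact Or.inl (Or.inl ⟨ht, h⟩)
          · exact Or.inl (Or.inr h)
          · exact Or.inr ⟨ht, h⟩
        calc 𝓝[Icc (0:ℝ) 1] x
            ≤ 𝓝[((Icc (0:ℝ) 1 ∩ Iio x) ∪ {x}) ∪ (Icc (0:ℝ) 1 ∩ Ioi x)] x :=
              nhdsWithin_mono _ hsub
          _ = _ := by rw [nhdsWithin_union, nhdsWithin_union, nhdsWithin_singleton]
      apply Eventually.filter_mono hcover
      rw [eventually_sup, eventually_sup]
      refine ⟨⟨hevL.mono fun y hy =>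
          le_trans (le_trans (min_le_left _ _) (min_le_left _ _)) hy, ?_⟩,
        hevR.mono fun y hy =>
          le_trans (le_trans (min_le_left _ _) (min_le_right _ _)) hy⟩
      exact eventually_pure.mpr (min_le_right _ _)
    · have hcont : ContinuousAt f x := pcd_continuousAt P hx hxD
      exact key hf P hnc hnp hx _ eventually_mem_nhdsWithin (hf hx)
        (hcont.tendsto.mono_left nhdsWithin_le_nhds) (Or.inr ⟨hxD, rfl⟩) k hk
  choose! ε hεpos hεev using hperk
  have hne : (Finset.Icc 1 r).Nonempty := ⟨1, by simp [hr]⟩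
  have hε₀pos : 0 < (Finset.Icc 1 r).inf' hne ε := by
    rw [Finset.lt_inf'_iff]
    intro k hkmem
    exact hεpos k (Finset.mem_Icc.mp hkmem).1
  set ε₀ := (Finset.Icc 1 r).inf' hne ε with hε₀
  have hbig : ∀ᶠ y in 𝓝[Icc (0:ℝ) 1] x, ∀ k ∈ Finset.Icc 1 r, ε₀ ≤ |f^[k] y - x| := by
    rw [eventually_all_finset]
    intro k hkmem
    exact (hεev k (Finset.mem_Icc.mp hkmem).1).mono fun y hy =>
      le_trans (Finset.inf'_le ε hkmem) hy
  rw [eventually_nhdsWithin_iff, Metric.eventually_nhds_iff] at hbig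
  obtain ⟨δ, hδ, hball⟩ := hbig
  have hmin : 0 < min δ ε₀ := lt_min hδ hε₀pos
  set η := min δ ε₀ / 2 with hη
  have hη0 : 0 < η := by rw [hη]; linarith
  have hηδ : η < δ := by
    have := min_le_left δ ε₀; rw [hη]; linarith
  have hηε : η < ε₀ := by
    have := min_le_right δ ε₀; rw [hη]; linarith
  refine ⟨x - η, x + η, by linarith, by linarith, ?_⟩
  rintro y ⟨hyI, hyIcc⟩ k hk1 hkr ⟨hfI, _⟩
  have hyd : dist y x < δ := by
    rw [Real.dist_eq, abs_lt]
    obtain ⟨h1, h2⟩ := hyI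
    constructor <;> linarith
  have hb := hball hyd hyIcc k (Finset.mem_Icc.mpr ⟨hk1, hkr⟩)
  obtain ⟨g1, g2⟩ := hfI
  have habs : |f^[k] y - x| < η := by
    rw [abs_lt]; constructor <;> linarith
  linarith
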